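/- In a uniformly random ranked tree (all rank functions on n leaves from the uniform distribution on ranked trees), the probability that the root bifurcation splits the n leaves into daughter trees of sizes r and n-r is 1/(n-1) for each r in {1,...,n-1} (with left/right daughters distinguished, i.e., for oriented trees). -/

import Mathlib

/-- A rooted binary tree with ordered (left/right) children. -/
inductive OTree : Type
  | leaf : OTree
  | node : OTree → OTree → OTree
deriving DecidableEq

/-- Number of leaves. -/
def OTree.nLeaves : OTree → ℕ
  | .leaf => 1
  | .node l r => l.nLeaves + r.nLeaves

/-- Number of internal nodes. -/
def OTree.nInt : OTree → ℕ
  | .leaf => 0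
  | .node l r => l.nInt + r.nInt + 1

/-- `t.isInt p` : the path `p` (`true` = left) leads to an internal node of `t`. -/
def OTree.isInt : OTree → List Bool → Prop
  | .leaf, _ => False
  | .node _ _, [] => True
  | .node l _, true :: p => l.isInt p
  | .node _ r, false :: p => r.isInt p

/-- `t.isLf p` : the path `p` leads to a leaf of `t`. -/
def OTree.isLf : OTree → List Bool → Prop
  | .leaf, [] => True
  | .leaf, _ :: _ => False
  | .node _ _, [] => False
  | .node l _, true :: p => l.isLf p
  | .node _ r, false :: p => r.isLf p

/-- A ranking of the internal nodes of `t`: a bijection to `{1,…,n-1}` (here `Fin t.nInt`)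
which strictly increases along every root-to-leaf path. -/
structure Ranking (t : OTree) where
  rk : {p : List Bool // t.isInt p} → Fin t.nInt
  bij : Function.Bijective rk
  mono : ∀ p q : {p : List Bool // t.isInt p}, p.1 <+: q.1 → p.1 ≠ q.1 → rk p < rk q

/-- A ranked oriented tree. -/
def RankedOTree := Σ t : OTree, Ranking t

namespace OTree

lemma one_le_nLeaves (t : OTree) : 1 ≤ t.nLeaves := by
  induction t with
  | leaf => simp [nLeaves]
  | node l r ihl ihr => simp [nLeaves]; omega

lemma nInt_eq (t : OTree) : t.nInt = t.nLeaves - 1 := by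
  induction t with
  | leaf => rfl
  | node l r ihl ihr =>
    have := l.one_le_nLeaves; have := r.one_le_nLeaves
    simp [nInt, nLeaves, ihl, ihr]; omega

def intPaths : OTree → Finset (List Bool)
  | .leaf => ∅
  | .node l r => insert [] ((l.intPaths.image (true :: ·)) ∪ (r.intPaths.image (false :: ·)))

lemma mem_intPaths : ∀ (t : OTree) (p : List Bool), p ∈ t.intPaths ↔ t.isInt p
  | .leaf, p => by simp [intPaths, isInt]
  | .node l r, [] => by simp [intPaths, isInt]
  | .node l r, true :: p => by
    simp [intPaths, isInt, mem_intPaths l p]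
  | .node l r, false :: p => by
    simp [intPaths, isInt, mem_intPaths r p]

lemma card_intPaths : ∀ t : OTree, t.intPaths.card = t.nInt
  | .leaf => rfl
  | .node l r => by
    rw [intPaths, Finset.card_insert_of_notMem (by simp),
      Finset.card_union_of_disjoint (by
        simp only [Finset.disjoint_left, Finset.mem_image]
        rintro a ⟨x, hx, rfl⟩ ⟨y, hy, h⟩
        simp at h),
      Finset.card_image_of_injective _ (by intro a b h; simpa using h),
      Finset.card_image_of_injective _ (by intro a b h; simpa using h),
      card_intPaths l, card_intPaths r, nInt]

instance isIntDecidable (t : OTree) : DecidablePred t.isInt := fun p =>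
  decidable_of_iff (p ∈ t.intPaths) (t.mem_intPaths p)

instance fintypeIntSubtype (t : OTree) : Fintype {p : List Bool // t.isInt p} :=
  Fintype.subtype t.intPaths t.mem_intPaths

lemma card_intSubtype (t : OTree) : Fintype.card {p : List Bool // t.isInt p} = t.nInt := by
  rw [Fintype.card_of_subtype t.intPaths t.mem_intPaths, card_intPaths]

end OTree

noncomputable instance fintypeRanking (t : OTree) : Fintype (Ranking t) :=
  Fintype.ofInjective (fun R => R.rk) (by intro a b h; cases a; cases b; simpa using h)

instance : Unique (Ranking .leaf) where
  default := ⟨fun p => absurd p.2 id, ⟨fun a b => absurd a.2 id, fun j => j.elim0⟩,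
    fun p q _ _ => absurd p.2 id⟩
  uniq R := by
    obtain ⟨rk, _, _⟩ := R
    congr 1
    funext p
    exact absurd p.2 id

section B
variable {l r : OTree}

def liftL (p : {p : List Bool // l.isInt p}) : {p : List Bool // (OTree.node l r).isInt p} :=
  ⟨true :: p.1, p.2⟩

def liftR (p : {p : List Bool // r.isInt p}) : {p : List Bool // (OTree.node l r).isInt p} :=
  ⟨false :: p.1, p.2⟩

def rootPath : {p : List Bool // (OTree.node l r).isInt p} := ⟨[], trivial⟩

lemma liftL_injective : Function.Injective (liftL (l := l) (r := r)) := by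
  intro p q h
  simpa [liftL, Subtype.ext_iff] using h

lemma liftR_injective : Function.Injective (liftR (l := l) (r := r)) := by
  intro p q h
  simpa [liftR, Subtype.ext_iff] using h

variable (R : Ranking (.node l r))

lemma rk_root_eq_zero : R.rk rootPath = (0 : Fin (l.nInt + r.nInt + 1)) := by
  obtain ⟨q, hq⟩ := R.bij.2 (0 : Fin (l.nInt + r.nInt + 1))
  rcases eq_or_ne q.1 [] with h | h
  · rw [← hq]; congr 1; exact Subtype.ext h.symm
  · exact absurd (hq ▸ R.mono rootPath q List.nil_prefix (Ne.symm h)) (Fin.not_lt_zero (n := l.nInt + r.nInt + 1) _)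

lemma rk_liftL_ne_zero (p : {p : List Bool // l.isInt p}) : R.rk (liftL p) ≠ (0 : Fin (l.nInt + r.nInt + 1)) :=
  (rk_root_eq_zero R ▸ R.mono rootPath (liftL p) List.nil_prefix (by simp [rootPath, liftL])).ne'

lemma rk_liftR_ne_zero (p : {p : List Bool // r.isInt p}) : R.rk (liftR p) ≠ (0 : Fin (l.nInt + r.nInt + 1)) :=
  (rk_root_eq_zero R ▸ R.mono rootPath (liftR p) List.nil_prefix (by simp [rootPath, liftR])).ne'

def predL (p : {p : List Bool // l.isInt p}) : Fin (l.nInt + r.nInt) :=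
  (R.rk (liftL p)).pred (rk_liftL_ne_zero R p)

def predR (p : {p : List Bool // r.isInt p}) : Fin (l.nInt + r.nInt) :=
  (R.rk (liftR p)).pred (rk_liftR_ne_zero R p)

lemma predL_injective : Function.Injective (predL R) := by
  intro p q h
  exact liftL_injective (R.bij.1 ((Fin.pred_inj).1 h))

lemma predR_injective : Function.Injective (predR R) := by
  intro p q h
  exact liftR_injective (R.bij.1 ((Fin.pred_inj).1 h))

def SL : Finset (Fin (l.nInt + r.nInt)) := Finset.univ.image (predL R)

lemma card_SL : (SL R).card = l.nInt := by
  rw [SL, Finset.card_image_of_injective _ (predL_injective R), Finset.card_univ,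
    OTree.card_intSubtype]

lemma card_SLc : (SL R)ᶜ.card = r.nInt := by
  rw [Finset.card_compl, card_SL]
  simp

lemma predL_mem_SL (p) : predL R p ∈ SL R := by
  exact Finset.mem_image_of_mem _ (Finset.mem_univ p)

lemma predR_mem_SLc (p) : predR R p ∈ (SL R)ᶜ := by
  rw [Finset.mem_compl, SL, Finset.mem_image]
  rintro ⟨q, -, hq⟩
  have h2 : R.rk (liftL q) = R.rk (liftR p) := Fin.pred_inj.1 hq
  have := R.bij.1 h2
  have h5 := congrArg Subtype.val this
  simp [liftL, liftR] at h5

end B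

section C
variable {l r : OTree} (R : Ranking (.node l r))

lemma image_predR : Finset.univ.image (predR R) = (SL R)ᶜ := by
  apply Finset.eq_of_subset_of_card_le
  · intro x hx
    obtain ⟨p, -, rfl⟩ := Finset.mem_image.1 hx
    exact predR_mem_SLc R p
  · rw [card_SLc, Finset.card_image_of_injective _ (predR_injective R), Finset.card_univ,
      OTree.card_intSubtype]

def rkL : Ranking l where
  rk p := (Finset.orderIsoOfFin (SL R) (card_SL R)).symm ⟨predL R p, predL_mem_SL R p⟩
  bij := by
    constructor
    · intro p q h
      apply predL_injective R
      have := (Finset.orderIsoOfFin (SL R) (card_SL R)).symm.injective h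
      simpa [Subtype.ext_iff] using this
    · intro j
      obtain ⟨p, -, hp⟩ := Finset.mem_image.1 ((Finset.orderIsoOfFin (SL R) (card_SL R)) j).2
      refine ⟨p, ?_⟩
      show (Finset.orderIsoOfFin (SL R) (card_SL R)).symm ⟨predL R p, predL_mem_SL R p⟩ = j
      rw [show (⟨predL R p, predL_mem_SL R p⟩ : ↥(SL R))
          = (Finset.orderIsoOfFin (SL R) (card_SL R)) j from Subtype.ext hp]
      exact (Finset.orderIsoOfFin (SL R) (card_SL R)).symm_apply_apply j
  mono p q hpf hne := by
    have h1 : R.rk (liftL p) < R.rk (liftL q) :=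
      R.mono _ _ (List.cons_prefix_cons.2 ⟨rfl, hpf⟩) (by simp [liftL, hne])
    have hp0 : (0 : Fin (l.nInt + r.nInt + 1)) < R.rk (liftL p) :=
      Fin.pos_of_ne_zero (rk_liftL_ne_zero R p)
    have h2 : predL R p < predL R q := by
      simp only [predL, Fin.lt_def, Fin.coe_pred]
      have := Fin.lt_def.1 h1
      have := Fin.lt_def.1 hp0
      have := Fin.coe_pred (R.rk (liftL p)) (rk_liftL_ne_zero R p)
      have := Fin.coe_pred (R.rk (liftL q)) (rk_liftL_ne_zero R q)
      omega
    exact (OrderIso.lt_iff_lt _).2 (Subtype.mk_lt_mk.2 h2)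

def rkR : Ranking r where
  rk p := (Finset.orderIsoOfFin (SL R)ᶜ (card_SLc R)).symm ⟨predR R p, predR_mem_SLc R p⟩
  bij := by
    constructor
    · intro p q h
      apply predR_injective R
      have := (Finset.orderIsoOfFin (SL R)ᶜ (card_SLc R)).symm.injective h
      simpa [Subtype.ext_iff] using this
    · intro j
      have hmem : (((Finset.orderIsoOfFin (SL R)ᶜ (card_SLc R)) j : ↥(SL R)ᶜ) : Fin (l.nInt + r.nInt))
          ∈ Finset.univ.image (predR R) := by
        rw [image_predR]; exact ((Finset.orderIsoOfFin (SL R)ᶜ (card_SLc R)) j).2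
      obtain ⟨p, -, hp⟩ := Finset.mem_image.1 hmem
      refine ⟨p, ?_⟩
      show (Finset.orderIsoOfFin (SL R)ᶜ (card_SLc R)).symm ⟨predR R p, predR_mem_SLc R p⟩ = j
      rw [show (⟨predR R p, predR_mem_SLc R p⟩ : ↥(SL R)ᶜ)
          = (Finset.orderIsoOfFin (SL R)ᶜ (card_SLc R)) j from Subtype.ext hp]
      exact (Finset.orderIsoOfFin (SL R)ᶜ (card_SLc R)).symm_apply_apply j
  mono p q hpf hne := by
    have h1 : R.rk (liftR p) < R.rk (liftR q) :=
      R.mono _ _ (List.cons_prefix_cons.2 ⟨rfl, hpf⟩) (by simp [liftR, hne])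
    have hp0 : (0 : Fin (l.nInt + r.nInt + 1)) < R.rk (liftR p) :=
      Fin.pos_of_ne_zero (rk_liftR_ne_zero R p)
    have h2 : predR R p < predR R q := by
      simp only [predR, Fin.lt_def, Fin.coe_pred]
      have := Fin.lt_def.1 h1
      have := Fin.lt_def.1 hp0
      have := Fin.coe_pred (R.rk (liftR p)) (rk_liftR_ne_zero R p)
      have := Fin.coe_pred (R.rk (liftR q)) (rk_liftR_ne_zero R q)
      omega
    exact (OrderIso.lt_iff_lt _).2 (Subtype.mk_lt_mk.2 h2)

end C

lemma orderIsoOfFin_congr {α : Type*} [LinearOrder α] {S T : Finset α} (h : S = T) {k : ℕ}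
    (hS : S.card = k) (hT : T.card = k) (i : Fin k) :
    ((S.orderIsoOfFin hS i : S) : α) = ((T.orderIsoOfFin hT i : T) : α) := by subst h; rfl

lemma orderIsoOfFin_symm_congr {α : Type*} [LinearOrder α] {S T : Finset α} (h : S = T) {k : ℕ}
    (hS : S.card = k) (hT : T.card = k) {x : α} (hx : x ∈ S) (hx' : x ∈ T) :
    (S.orderIsoOfFin hS).symm ⟨x, hx⟩ = (T.orderIsoOfFin hT).symm ⟨x, hx'⟩ := by subst h; rfl

lemma Ranking.ext' {t : OTree} {R1 R2 : Ranking t} (h : R1.rk = R2.rk) : R1 = R2 := by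
  cases R1; cases R2; cases h; rfl

section D
variable {l r : OTree} (R : Ranking (.node l r))

lemma rk_liftL_eq (p : {p : List Bool // l.isInt p}) :
    R.rk (liftL p)
      = ((((SL R).orderIsoOfFin (card_SL R)) ((rkL R).rk p) : ↥(SL R)) : Fin (l.nInt + r.nInt)).succ := by
  have h : ((SL R).orderIsoOfFin (card_SL R)) ((rkL R).rk p) = ⟨predL R p, predL_mem_SL R p⟩ :=
    OrderIso.apply_symm_apply _ _
  rw [h]
  exact (Fin.succ_pred _ (rk_liftL_ne_zero R p)).symm

lemma rk_liftR_eq (p : {p : List Bool // r.isInt p}) :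
    R.rk (liftR p)
      = ((((SL R)ᶜ.orderIsoOfFin (card_SLc R)) ((rkR R).rk p) : ↥(SL R)ᶜ) : Fin (l.nInt + r.nInt)).succ := by
  have h : ((SL R)ᶜ.orderIsoOfFin (card_SLc R)) ((rkR R).rk p) = ⟨predR R p, predR_mem_SLc R p⟩ :=
    OrderIso.apply_symm_apply _ _
  rw [h]
  exact (Fin.succ_pred _ (rk_liftR_ne_zero R p)).symm

def Fmap (R : Ranking (.node l r)) :
    Ranking l × Ranking r × {S : Finset (Fin (l.nInt + r.nInt)) // S.card = l.nInt} :=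
  (rkL R, rkR R, ⟨SL R, card_SL R⟩)

lemma Fmap_injective : Function.Injective (Fmap (l := l) (r := r)) := by
  intro R1 R2 h
  have hL : rkL R1 = rkL R2 := congrArg Prod.fst h
  have hR : rkR R1 = rkR R2 := congrArg (fun x => x.2.1) h
  have hS : SL R1 = SL R2 := Subtype.ext_iff.1 (congrArg (fun x => x.2.2) h)
  apply Ranking.ext'
  funext q
  obtain ⟨q, hq⟩ := q
  match q, hq with
  | [], hq => exact (rk_root_eq_zero R1).trans (rk_root_eq_zero R2).symm
  | true :: p, hq =>
    show R1.rk (liftL ⟨p, hq⟩) = R2.rk (liftL ⟨p, hq⟩)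
    rw [rk_liftL_eq R1, rk_liftL_eq R2, hL]
    exact congrArg Fin.succ (orderIsoOfFin_congr hS _ _ _)
  | false :: p, hq =>
    show R1.rk (liftR ⟨p, hq⟩) = R2.rk (liftR ⟨p, hq⟩)
    rw [rk_liftR_eq R1, rk_liftR_eq R2, hR]
    exact congrArg Fin.succ (orderIsoOfFin_congr (by rw [hS]) _ _ _)

end D

lemma card_Sc {l r : OTree} (S : Finset (Fin (l.nInt + r.nInt))) (hS : S.card = l.nInt) :
    Sᶜ.card = r.nInt := by
  rw [Finset.card_compl, hS]; simp

section E
variable {l r : OTree} (ρL : Ranking l) (ρR : Ranking r)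
  (S : Finset (Fin (l.nInt + r.nInt))) (hS : S.card = l.nInt)

def buildRk : {p : List Bool // (OTree.node l r).isInt p} → Fin (l.nInt + r.nInt + 1) :=
  fun q => match q with
  | ⟨[], _⟩ => 0
  | ⟨true :: p, h⟩ => (((S.orderIsoOfFin hS) (ρL.rk ⟨p, h⟩) : ↥S) : Fin (l.nInt + r.nInt)).succ
  | ⟨false :: p, h⟩ =>
    (((Sᶜ.orderIsoOfFin (card_Sc S hS)) (ρR.rk ⟨p, h⟩) : ↥Sᶜ) : Fin (l.nInt + r.nInt)).succ

lemma buildRk_nil (h) : buildRk ρL ρR S hS ⟨[], h⟩ = 0 := rfl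

lemma buildRk_true (p h) : buildRk ρL ρR S hS ⟨true :: p, h⟩
    = (((S.orderIsoOfFin hS) (ρL.rk ⟨p, h⟩) : ↥S) : Fin (l.nInt + r.nInt)).succ := rfl

lemma buildRk_false (p h) : buildRk ρL ρR S hS ⟨false :: p, h⟩
    = (((Sᶜ.orderIsoOfFin (card_Sc S hS)) (ρR.rk ⟨p, h⟩) : ↥Sᶜ) : Fin (l.nInt + r.nInt)).succ := rfl

lemma buildRk_bij : Function.Bijective (buildRk ρL ρR S hS) := by
  constructor
  · intro ⟨q1, h1⟩ ⟨q2, h2⟩ h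
    match q1, h1, q2, h2 with
    | [], h1, [], h2 => rfl
    | [], h1, true :: p2, h2 =>
      rw [buildRk_nil, buildRk_true] at h
      exact absurd h.symm (Fin.succ_ne_zero _)
    | [], h1, false :: p2, h2 =>
      rw [buildRk_nil, buildRk_false] at h
      exact absurd h.symm (Fin.succ_ne_zero _)
    | true :: p1, h1, [], h2 =>
      rw [buildRk_nil, buildRk_true] at h
      exact absurd h (Fin.succ_ne_zero _)
    | false :: p1, h1, [], h2 =>
      rw [buildRk_nil, buildRk_false] at h
      exact absurd h (Fin.succ_ne_zero _)
    | true :: p1, h1, true :: p2, h2 =>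
      rw [buildRk_true, buildRk_true] at h
      have h3 := Subtype.ext (Fin.succ_injective _ h)
      have h4 := ρL.bij.1 ((S.orderIsoOfFin hS).injective h3)
      have : p1 = p2 := congrArg Subtype.val h4
      cases this; rfl
    | false :: p1, h1, false :: p2, h2 =>
      rw [buildRk_false, buildRk_false] at h
      have h3 := Subtype.ext (Fin.succ_injective _ h)
      have h4 := ρR.bij.1 ((Sᶜ.orderIsoOfFin (card_Sc S hS)).injective h3)
      have : p1 = p2 := congrArg Subtype.val h4
      cases this; rfl
    | true :: p1, h1, false :: p2, h2 =>
      rw [buildRk_true, buildRk_false] at h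
      have h3 := Fin.succ_injective _ h
      have hmem := ((S.orderIsoOfFin hS) (ρL.rk ⟨p1, h1⟩)).2
      have hmem2 := ((Sᶜ.orderIsoOfFin (card_Sc S hS)) (ρR.rk ⟨p2, h2⟩)).2
      rw [← h3, Finset.mem_compl] at hmem2
      exact absurd hmem hmem2
    | false :: p1, h1, true :: p2, h2 =>
      rw [buildRk_true, buildRk_false] at h
      have h3 := Fin.succ_injective _ h
      have hmem := ((S.orderIsoOfFin hS) (ρL.rk ⟨p2, h2⟩)).2
      have hmem2 := ((Sᶜ.orderIsoOfFin (card_Sc S hS)) (ρR.rk ⟨p1, h1⟩)).2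
      rw [h3, Finset.mem_compl] at hmem2
      exact absurd hmem hmem2
  · intro j
    rcases Fin.eq_zero_or_eq_succ j with rfl | ⟨i, rfl⟩
    · exact ⟨⟨[], trivial⟩, rfl⟩
    · by_cases hi : i ∈ S
      · obtain ⟨p, hp⟩ := ρL.bij.2 ((S.orderIsoOfFin hS).symm ⟨i, hi⟩)
        refine ⟨⟨true :: p.1, p.2⟩, ?_⟩
        refine (buildRk_true ρL ρR S hS p.1 p.2).trans ?_
        have : (⟨p.1, p.2⟩ : {p : List Bool // l.isInt p}) = p := rfl
        rw [this, hp, OrderIso.apply_symm_apply]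
      · rw [← Finset.mem_compl] at hi
        obtain ⟨p, hp⟩ := ρR.bij.2 ((Sᶜ.orderIsoOfFin (card_Sc S hS)).symm ⟨i, hi⟩)
        refine ⟨⟨false :: p.1, p.2⟩, ?_⟩
        refine (buildRk_false ρL ρR S hS p.1 p.2).trans ?_
        have : (⟨p.1, p.2⟩ : {p : List Bool // r.isInt p}) = p := rfl
        rw [this, hp, OrderIso.apply_symm_apply]

lemma buildRk_mono : ∀ p q : {p : List Bool // (OTree.node l r).isInt p},
    p.1 <+: q.1 → p.1 ≠ q.1 → buildRk ρL ρR S hS p < buildRk ρL ρR S hS q := by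
  intro ⟨q1, h1⟩ ⟨q2, h2⟩ hpf hne
  match q1, h1, q2, h2 with
  | [], h1, [], h2 => exact absurd rfl hne
  | [], h1, true :: p2, h2 => rw [buildRk_nil, buildRk_true]; exact Fin.succ_pos _
  | [], h1, false :: p2, h2 => rw [buildRk_nil, buildRk_false]; exact Fin.succ_pos _
  | true :: p1, h1, [], h2 => simp at hpf
  | false :: p1, h1, [], h2 => simp at hpf
  | true :: p1, h1, false :: p2, h2 => simp [List.cons_prefix_cons] at hpf
  | false :: p1, h1, true :: p2, h2 => simp [List.cons_prefix_cons] at hpf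
  | true :: p1, h1, true :: p2, h2 =>
    rw [buildRk_true, buildRk_true, Fin.succ_lt_succ_iff]
    have h3 := ρL.mono ⟨p1, h1⟩ ⟨p2, h2⟩ (List.cons_prefix_cons.1 hpf).2 (by simpa using hne)
    exact Subtype.coe_lt_coe.2 ((S.orderIsoOfFin hS).lt_iff_lt.2 h3)
  | false :: p1, h1, false :: p2, h2 =>
    rw [buildRk_false, buildRk_false, Fin.succ_lt_succ_iff]
    have h3 := ρR.mono ⟨p1, h1⟩ ⟨p2, h2⟩ (List.cons_prefix_cons.1 hpf).2 (by simpa using hne)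
    exact Subtype.coe_lt_coe.2 ((Sᶜ.orderIsoOfFin (card_Sc S hS)).lt_iff_lt.2 h3)

def build : Ranking (.node l r) :=
  ⟨buildRk ρL ρR S hS, buildRk_bij ρL ρR S hS, buildRk_mono ρL ρR S hS⟩

end E

section F
variable {l r : OTree} (ρL : Ranking l) (ρR : Ranking r)
  (S : Finset (Fin (l.nInt + r.nInt))) (hS : S.card = l.nInt)

lemma predL_build (p) : predL (build ρL ρR S hS) p
    = (((S.orderIsoOfFin hS) (ρL.rk p) : ↥S) : Fin (l.nInt + r.nInt)) := by
  refine Fin.succ_injective _ ?_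
  unfold predL
  refine (Fin.succ_pred _ _).trans ?_
  exact buildRk_true ρL ρR S hS p.1 p.2

lemma predR_build (p) : predR (build ρL ρR S hS) p
    = (((Sᶜ.orderIsoOfFin (card_Sc S hS)) (ρR.rk p) : ↥Sᶜ) : Fin (l.nInt + r.nInt)) := by
  refine Fin.succ_injective _ ?_
  unfold predR
  refine (Fin.succ_pred _ _).trans ?_
  exact buildRk_false ρL ρR S hS p.1 p.2

lemma SL_build : SL (build ρL ρR S hS) = S := by
  apply Finset.eq_of_subset_of_card_le
  · intro x hx
    obtain ⟨p, -, rfl⟩ := Finset.mem_image.1 hx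
    rw [predL_build]
    exact ((S.orderIsoOfFin hS) (ρL.rk p)).2
  · rw [card_SL, hS]

lemma rkL_build : rkL (build ρL ρR S hS) = ρL := by
  apply Ranking.ext'
  funext p
  show ((SL (build ρL ρR S hS)).orderIsoOfFin (card_SL _)).symm
      ⟨predL (build ρL ρR S hS) p, predL_mem_SL _ p⟩ = ρL.rk p
  have hmem : predL (build ρL ρR S hS) p ∈ S := by
    have h0 := predL_mem_SL (build ρL ρR S hS) p
    rwa [SL_build ρL ρR S hS] at h0
  rw [orderIsoOfFin_symm_congr (SL_build ρL ρR S hS) (card_SL _) hS _ hmem]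
  have h1 : (⟨predL (build ρL ρR S hS) p, hmem⟩ : ↥S) = (S.orderIsoOfFin hS) (ρL.rk p) :=
    Subtype.ext (predL_build ρL ρR S hS p)
  rw [h1, OrderIso.symm_apply_apply]

lemma rkR_build : rkR (build ρL ρR S hS) = ρR := by
  apply Ranking.ext'
  funext p
  show ((SL (build ρL ρR S hS))ᶜ.orderIsoOfFin (card_SLc _)).symm
      ⟨predR (build ρL ρR S hS) p, predR_mem_SLc _ p⟩ = ρR.rk p
  have hc : (SL (build ρL ρR S hS))ᶜ = Sᶜ := by rw [SL_build]
  have hmem : predR (build ρL ρR S hS) p ∈ Sᶜ := by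
    have h0 := predR_mem_SLc (build ρL ρR S hS) p
    rwa [hc] at h0
  rw [orderIsoOfFin_symm_congr hc (card_SLc _) (card_Sc S hS) _ hmem]
  have h1 : (⟨predR (build ρL ρR S hS) p, hmem⟩ : ↥Sᶜ)
      = (Sᶜ.orderIsoOfFin (card_Sc S hS)) (ρR.rk p) :=
    Subtype.ext (predR_build ρL ρR S hS p)
  rw [h1, OrderIso.symm_apply_apply]

lemma Fmap_surjective : Function.Surjective (Fmap (l := l) (r := r)) := by
  rintro ⟨pL, pR, T, hT⟩
  refine ⟨build pL pR T hT, ?_⟩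
  unfold Fmap
  have h3 : (⟨SL (build pL pR T hT), card_SL _⟩ : {S : Finset (Fin (l.nInt + r.nInt)) // S.card = l.nInt})
      = ⟨T, hT⟩ := Subtype.ext (SL_build pL pR T hT)
  rw [rkL_build, rkR_build, h3]

end F

theorem card_ranking_node (l r : OTree) :
    Fintype.card (Ranking (.node l r))
      = Nat.choose (l.nInt + r.nInt) l.nInt * Fintype.card (Ranking l) * Fintype.card (Ranking r) := by
  rw [Fintype.card_congr (Equiv.ofBijective _ ⟨Fmap_injective, Fmap_surjective⟩)]
  rw [Fintype.card_prod, Fintype.card_prod, Fintype.card_finset_len, Fintype.card_fin]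
  ring

section G

lemma two_le_nLeaves_node (l r : OTree) : 2 ≤ (OTree.node l r).nLeaves := by
  have := l.one_le_nLeaves; have := r.one_le_nLeaves
  show 2 ≤ l.nLeaves + r.nLeaves
  omega

lemma finite_trees (n : ℕ) : {t : OTree | t.nLeaves = n}.Finite := by
  induction n using Nat.strong_induction_on with
  | _ n ih =>
    rcases le_or_gt n 1 with hn | hn
    · apply Set.Finite.subset (Set.finite_singleton OTree.leaf)
      rintro t ht
      cases t with
      | leaf => rfl
      | node l r =>
        have h := two_le_nLeaves_node l r
        simp only [Set.mem_setOf_eq] at ht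
        exact absurd ht (by omega)
    · apply Set.Finite.subset (Set.Finite.biUnion (Set.finite_Ioo 0 n)
        (fun a (ha : a ∈ Set.Ioo 0 n) =>
          Set.Finite.image2 OTree.node (ih a ha.2) (ih (n - a) (by have h1 := ha.1; omega))))
      rintro t ht
      cases t with
      | leaf => simp only [Set.mem_setOf_eq, OTree.nLeaves] at ht; omega
      | node l r =>
        have h1 := l.one_le_nLeaves
        have h2 := r.one_le_nLeaves
        have ht' : l.nLeaves + r.nLeaves = n := ht
        refine Set.mem_biUnion (show l.nLeaves ∈ Set.Ioo 0 n by constructor <;> omega) ?_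
        exact Set.mem_image2_of_mem rfl (by simp only [Set.mem_setOf_eq]; omega)

noncomputable instance fintypeTrees (n : ℕ) : Fintype {t : OTree // t.nLeaves = n} :=
  (finite_trees n).fintype

noncomputable def rankedEquiv (q : OTree → Prop) :
    {x : RankedOTree // q x.1} ≃ Σ t : Subtype q, Ranking t.1 :=
  Equiv.subtypeSigmaEquiv Ranking q

end G

section H

noncomputable def Dcard (n : ℕ) : ℕ := Nat.card {x : RankedOTree // x.1.nLeaves = n}

@[reducible] noncomputable def fintypeRankedPred (q : OTree → Prop) (n : ℕ) (hq : ∀ t, q t → t.nLeaves = n) :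
    Fintype {x : RankedOTree // q x.1} :=
  haveI : Fintype (Subtype q) := ((finite_trees n).subset (fun t ht => hq t ht)).fintype
  Fintype.ofEquiv _ (rankedEquiv q).symm

noncomputable instance fintypeRankedSplit (n r : ℕ) : Fintype {x : RankedOTree //
    x.1.nLeaves = n ∧ ∃ l rr : OTree, x.1 = .node l rr ∧ l.nLeaves = r} :=
  fintypeRankedPred (fun t => t.nLeaves = n ∧ ∃ l rr : OTree, t = .node l rr ∧ l.nLeaves = r) n
    (fun _ ht => ht.1)

noncomputable instance fintypeRankedLeaves (n : ℕ) : Fintype {x : RankedOTree // x.1.nLeaves = n} :=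
  fintypeRankedPred _ n (fun _ ht => ht)

lemma Dcard_eq_sum (n : ℕ) :
    Dcard n = ∑ t : {t : OTree // t.nLeaves = n}, Fintype.card (Ranking t.1) := by
  rw [Dcard, Nat.card_congr (rankedEquiv (fun t => t.nLeaves = n)), Nat.card_eq_fintype_card,
    Fintype.card_sigma]

instance : Unique {t : OTree // t.nLeaves = 1} where
  default := ⟨.leaf, rfl⟩
  uniq t := by
    obtain ⟨t, ht⟩ := t
    cases t with
    | leaf => rfl
    | node l r => exact absurd ht (by have := two_le_nLeaves_node l r; omega)

lemma Dcard_one : Dcard 1 = 1 := by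
  rw [Dcard_eq_sum, Fintype.sum_unique]
  show Fintype.card (Ranking OTree.leaf) = 1
  exact Fintype.card_unique

noncomputable def NumCard (n r : ℕ) : ℕ := Nat.card {x : RankedOTree //
    x.1.nLeaves = n ∧ ∃ l rr : OTree, x.1 = .node l rr ∧ l.nLeaves = r}

def Gmap (n r : ℕ) (hr1 : 1 ≤ r) (hrn : r < n) :
    (Σ p : {l : OTree // l.nLeaves = r} × {rr : OTree // rr.nLeaves = n - r},
        Ranking (OTree.node p.1.1 p.2.1))
      → {x : RankedOTree // x.1.nLeaves = n ∧ ∃ l rr : OTree, x.1 = .node l rr ∧ l.nLeaves = r} :=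
  fun z => ⟨⟨.node z.1.1.1 z.1.2.1, z.2⟩, by
    constructor
    · show z.1.1.1.nLeaves + z.1.2.1.nLeaves = n
      have := z.1.1.2; have := z.1.2.2; omega
    · exact ⟨z.1.1.1, z.1.2.1, rfl, z.1.1.2⟩⟩

lemma NumCard_eq_sum (n r : ℕ) (hr1 : 1 ≤ r) (hrn : r < n) :
    NumCard n r = ∑ p : {l : OTree // l.nLeaves = r} × {rr : OTree // rr.nLeaves = n - r},
      Fintype.card (Ranking (.node p.1.1 p.2.1)) := by
  have hGbij : Function.Bijective (Gmap n r hr1 hrn) := by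
    constructor
    · rintro ⟨⟨⟨a, ha⟩, ⟨b, hb⟩⟩, R1⟩ ⟨⟨⟨c, hc⟩, ⟨d, hd⟩⟩, R2⟩ h
      have h' : (⟨OTree.node a b, R1⟩ : Σ t : OTree, Ranking t) = ⟨OTree.node c d, R2⟩ :=
        Subtype.ext_iff.1 h
      obtain ⟨h1, h2⟩ := Sigma.mk.inj_iff.1 h'
      injection h1 with hac hbd
      subst hac; subst hbd
      cases eq_of_heq h2
      rfl
    · rintro ⟨⟨t, R⟩, hx⟩
      obtain ⟨hn, a, b, ht, ha⟩ := hx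
      dsimp only at hn ht
      subst ht
      have hab : a.nLeaves + b.nLeaves = n := hn
      exact ⟨⟨⟨⟨a, ha⟩, ⟨b, by omega⟩⟩, R⟩, rfl⟩
  rw [NumCard, ← Nat.card_eq_of_bijective (Gmap n r hr1 hrn) hGbij, Nat.card_eq_fintype_card,
    Fintype.card_sigma]

lemma NumCard_formula (n r : ℕ) (hn : 2 ≤ n) (hr1 : 1 ≤ r) (hrn : r < n) :
    NumCard n r = Nat.choose (n - 2) (r - 1) * Dcard r * Dcard (n - r) := by
  rw [NumCard_eq_sum n r hr1 hrn]
  have key : ∀ p : {l : OTree // l.nLeaves = r} × {rr : OTree // rr.nLeaves = n - r},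
      Fintype.card (Ranking (.node p.1.1 p.2.1))
        = Nat.choose (n - 2) (r - 1) * (Fintype.card (Ranking p.1.1) * Fintype.card (Ranking p.2.1)) := by
    intro p
    rw [card_ranking_node]
    have h1 : p.1.1.nInt = r - 1 := by rw [OTree.nInt_eq, p.1.2]
    have h2 : p.2.1.nInt = n - r - 1 := by rw [OTree.nInt_eq, p.2.2]
    have h3 := p.1.1.one_le_nLeaves
    have h4 := p.2.1.one_le_nLeaves
    rw [h1, h2, show r - 1 + (n - r - 1) = n - 2 by
      have := p.1.2; have := p.2.2; omega]
    ring
  rw [Finset.sum_congr rfl (fun p _ => key p), ← Finset.mul_sum, mul_assoc]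
  congr 1
  rw [Fintype.sum_prod_type, Dcard_eq_sum, Dcard_eq_sum, Finset.sum_mul_sum]

end H

section I

def leftLeaves : OTree → ℕ
  | .leaf => 0
  | .node l _ => l.nLeaves

lemma filter_card (n b : ℕ) (hn : 2 ≤ n) :
    Fintype.card {x : {x : RankedOTree // x.1.nLeaves = n} // leftLeaves x.1.1 = b}
      = NumCard n b := by
  rw [NumCard, Nat.card_eq_fintype_card]
  apply Fintype.card_congr
  refine ((Equiv.subtypeSubtypeEquivSubtypeInter (fun y : RankedOTree => y.1.nLeaves = n)
    (fun y => leftLeaves y.1 = b)).trans (Equiv.subtypeEquivRight ?_))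
  rintro ⟨t, R⟩
  cases t with
  | leaf =>
    constructor
    · rintro ⟨h1, h2⟩
      exact absurd h1 (by show ¬ ((1 : ℕ) = n); omega)
    · rintro ⟨h1, l, rr, hlr, -⟩
      exact absurd hlr (by simp)
  | node l rr =>
    constructor
    · rintro ⟨h1, h2⟩
      exact ⟨h1, l, rr, rfl, h2⟩
    · rintro ⟨h1, l', rr', hlr, hl⟩
      refine ⟨h1, ?_⟩
      have hlr' : OTree.node l rr = OTree.node l' rr' := hlr
      injection hlr' with e1 e2
      subst e1
      exact hl

lemma Dcard_partition (n : ℕ) (hn : 2 ≤ n) :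
    Dcard n = ∑ b ∈ Finset.Ico 1 n, NumCard n b := by
  classical
  rw [Dcard, Nat.card_eq_fintype_card, ← Finset.card_univ,
    Finset.card_eq_sum_card_fiberwise (f := fun x : {x : RankedOTree // x.1.nLeaves = n} =>
      leftLeaves x.1.1) (t := Finset.Ico 1 n) ?_]
  · refine Finset.sum_congr rfl fun b _ => ?_
    rw [← filter_card n b hn, Fintype.card_subtype]
  · rintro ⟨⟨t, R⟩, hx⟩ -
    cases t with
    | leaf => exact absurd hx (by show ¬ ((1 : ℕ) = n); omega)
    | node l r =>
      have := l.one_le_nLeaves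
      have := r.one_le_nLeaves
      have hx' : l.nLeaves + r.nLeaves = n := hx
      simp only [Finset.mem_coe, Finset.mem_Ico, leftLeaves]
      omega

lemma Dcard_fact : ∀ n, 1 ≤ n → Dcard n = (n - 1).factorial := by
  intro n
  induction n using Nat.strong_induction_on with
  | _ n ih =>
    intro hn1
    rcases eq_or_lt_of_le hn1 with h1 | hn2
    · rw [← h1, Dcard_one]; rfl
    · rw [Dcard_partition n hn2]
      have key : ∀ b ∈ Finset.Ico 1 n, NumCard n b = (n - 2).factorial := by
        intro b hb
        rw [Finset.mem_Ico] at hb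
        rw [NumCard_formula n b hn2 hb.1 hb.2, ih b hb.2 hb.1,
          ih (n - b) (by omega) (by omega)]
        have e : n - b - 1 = (n - 2) - (b - 1) := by omega
        rw [e]
        exact Nat.choose_mul_factorial_mul_factorial (by omega)
      rw [Finset.sum_congr rfl key, Finset.sum_const, Nat.card_Ico, smul_eq_mul,
        show n - 1 = (n - 2) + 1 by omega, Nat.factorial_succ]

lemma NumCard_fact (n r : ℕ) (hn : 2 ≤ n) (hr1 : 1 ≤ r) (hr2 : r ≤ n - 1) :
    NumCard n r = (n - 2).factorial := by
  rw [NumCard_formula n r hn hr1 (by omega), Dcard_fact r hr1, Dcard_fact (n - r) (by omega)]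
  have e : n - r - 1 = (n - 2) - (r - 1) := by omega
  rw [e]
  exact Nat.choose_mul_factorial_mul_factorial (by omega)

end I


/-- under the uniform distribution on ranked oriented trees with n leaves, the
probability that the root split has r leaves on the left is 1/(n-1), for each r in {1,…,n-1}. -/
theorem stmt10 (n r : ℕ) (hn : 2 ≤ n) (hr1 : 1 ≤ r) (hr2 : r ≤ n - 1) :
    (Nat.card {x : RankedOTree //
        x.1.nLeaves = n ∧ ∃ l rr : OTree, x.1 = .node l rr ∧ l.nLeaves = r} : ℚ)
      / (Nat.card {x : RankedOTree // x.1.nLeaves = n})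
    = 1 / ((n : ℚ) - 1) := by
  have h1 : (Nat.card {x : RankedOTree //
      x.1.nLeaves = n ∧ ∃ l rr : OTree, x.1 = .node l rr ∧ l.nLeaves = r}) = NumCard n r := rfl
  have h2 : (Nat.card {x : RankedOTree // x.1.nLeaves = n}) = Dcard n := rfl
  rw [h1, h2, NumCard_fact n r hn hr1 hr2, Dcard_fact n (by omega),
    show n - 1 = (n - 2) + 1 by omega, Nat.factorial_succ]
  have hx : (((n - 2).factorial : ℕ) : ℚ) ≠ 0 := Nat.cast_ne_zero.2 (Nat.factorial_ne_zero _)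
  have hcast : (((n - 2 : ℕ) + 1 : ℕ) : ℚ) = (n : ℚ) - 1 := by
    push_cast [Nat.cast_sub hn]
    ring
  rw [Nat.cast_mul, hcast, mul_comm, ← div_div, div_self hx, one_div]
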